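/- Let ⊗ : [0,1]² → [0,1] be a fuzzy conjunction and ⋆ : [0,1]² → [0,1] be nondecreasing and left-continuous with 1 ⋆ 0 = 0 = 0 ⋆ 1. For i=1,2,3 let φᵢ : [0,1] → [0,1] be continuous and increasing with φᵢ(0)=0 and 1 ⊗ φᵢ(1) ≤ φᵢ(1). Then the following are equivalent: (i) φ₁⁻¹(a ⊗ φ₁(b⋆c)) ≥ max( φ₂⁻¹(a ⊗ φ₂(b)) ⋆ φ₃⁻¹(1 ⊗ φ₃(c)), φ₂⁻¹(1 ⊗ φ₂(b)) ⋆ φ₃⁻¹(a ⊗ φ₃(c)) ) for all a,b,c ∈ [0,1]; (ii) φ₁⁻¹(∫_m^⊗ φ₁(f⋆g)) ≥ φ₂⁻¹(∫_m^⊗ φ₂(f)) ⋆ φ₃⁻¹(∫_m^⊗ φ₃(g)) for every capacity m on any measurable space (X,𝒜) and all f,g ∈ F^1 comonotone on X. Here φᵢ⁻¹ denotes the inverse of φᵢ on its range [0,φᵢ(1)]. -/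

import Mathlib

open Set ENNReal

noncomputable def uSugeno {X : Type*} (ybar : ℝ≥0∞) (op : ℝ≥0∞ → ℝ≥0∞ → ℝ≥0∞)
    (m : Set X → ℝ≥0∞) (D : Set X) (f : X → ℝ≥0∞) : ℝ≥0∞ :=
  ⨆ t ∈ Set.Iic ybar, op t (m (D ∩ {x | t ≤ f x}))

noncomputable def qInt {X : Type*} (oti : ℝ≥0∞ → ℝ≥0∞ → ℝ≥0∞)
    (m : Set X → ℝ≥0∞) (f : X → ℝ≥0∞) : ℝ≥0∞ :=
  ⨆ t ∈ Set.Iic (1 : ℝ≥0∞), oti (m {x | t ≤ f x}) t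

def Mono2On (op : ℝ≥0∞ → ℝ≥0∞ → ℝ≥0∞) (s t : Set ℝ≥0∞) : Prop :=
  ∀ ⦃a₁⦄, a₁ ∈ s → ∀ ⦃b₁⦄, b₁ ∈ t → ∀ ⦃a₂⦄, a₂ ∈ s → ∀ ⦃b₂⦄, b₂ ∈ t →
    a₁ ≤ a₂ → b₁ ≤ b₂ → op a₁ b₁ ≤ op a₂ b₂

def LeftContOn (g : ℝ≥0∞ → ℝ≥0∞) (s : Set ℝ≥0∞) : Prop :=
  ∀ x ∈ s, ContinuousWithinAt g (Set.Iic x) x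

def RightContOn (g : ℝ≥0∞ → ℝ≥0∞) (s : Set ℝ≥0∞) : Prop :=
  ∀ x ∈ s, ContinuousWithinAt g (Set.Ici x) x

def LeftCont2On (op : ℝ≥0∞ → ℝ≥0∞ → ℝ≥0∞) (s t : Set ℝ≥0∞) : Prop :=
  (∀ b ∈ t, ∀ a ∈ s, ContinuousWithinAt (fun x => op x b) (Set.Iic a) a) ∧
  (∀ a ∈ s, ∀ b ∈ t, ContinuousWithinAt (fun y => op a y) (Set.Iic b) b)

def mRange {X : Type*} [MeasurableSpace X] (m : Set X → ℝ≥0∞) : Set ℝ≥0∞ :=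
  {c | ∃ A : Set X, MeasurableSet A ∧ m A = c}

def MonotoneMeasure {X : Type*} [MeasurableSpace X] (m : Set X → ℝ≥0∞) : Prop :=
  m ∅ = 0 ∧ 0 < m Set.univ ∧
    ∀ ⦃A B : Set X⦄, MeasurableSet A → MeasurableSet B → A ⊆ B → m A ≤ m B

def IsCapacity {X : Type*} [MeasurableSpace X] (m : Set X → ℝ≥0∞) : Prop :=
  m ∅ = 0 ∧ m Set.univ = 1 ∧
    ∀ ⦃A B : Set X⦄, MeasurableSet A → MeasurableSet B → A ⊆ B → m A ≤ m B

def ComonotoneOn {X : Type*} (D : Set X) (f g : X → ℝ≥0∞) : Prop :=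
  ∀ x ∈ D, ∀ y ∈ D, f x < f y → g x ≤ g y

def IsSemicopula (S : ℝ≥0∞ → ℝ≥0∞ → ℝ≥0∞) : Prop :=
  Mono2On S (Set.Iic 1) (Set.Iic 1) ∧
    ∀ a ∈ Set.Iic (1 : ℝ≥0∞), S a 1 = a ∧ S 1 a = a

def MPosDep {X : Type*} (m : Set X → ℝ≥0∞) (tri : ℝ≥0∞ → ℝ≥0∞ → ℝ≥0∞)
    (k : ℝ≥0∞) (A B : Set X) (f g : X → ℝ≥0∞) : Prop :=
  ∀ α ∈ Set.Iic k, ∀ β ∈ Set.Iic k,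
    tri (m (A ∩ {x | α ≤ f x})) (m (B ∩ {x | β ≤ g x})) ≤
      m (A ∩ B ∩ {x | α ≤ f x} ∩ {x | β ≤ g x})


open Filter Topology

lemma phi_surj {φ : ℝ≥0∞ → ℝ≥0∞} (hc : ContinuousOn φ (Set.Iic 1))
    (hz : φ 0 = 0) {y : ℝ≥0∞} (hy : y ≤ φ 1) : ∃ x ≤ (1:ℝ≥0∞), φ x = y := by
  have h01 : Set.Icc (0:ℝ≥0∞) 1 = Set.Iic 1 := by ext z; simp
  have h2 := intermediate_value_Icc ((show (0:ℝ≥0∞) ≤ 1 from zero_le)) (h01 ▸ hc)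
  have hy' : y ∈ Set.Icc (φ 0) (φ 1) := ⟨le_of_eq_of_le hz (show (0:ℝ≥0∞) ≤ y from zero_le), hy⟩
  obtain ⟨x, hx, hxy⟩ := h2 hy'
  exact ⟨x, hx.2, hxy⟩

lemma psi_spec {φ ψ : ℝ≥0∞ → ℝ≥0∞} (hc : ContinuousOn φ (Set.Iic 1)) (hz : φ 0 = 0)
    (hψ : ∀ x ∈ Set.Iic (1:ℝ≥0∞), ψ (φ x) = x) {y : ℝ≥0∞} (hy : y ≤ φ 1) :
    ψ y ≤ 1 ∧ φ (ψ y) = y := by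
  obtain ⟨x, hx, rfl⟩ := phi_surj hc hz hy
  rw [hψ x hx]
  exact ⟨hx, rfl⟩

lemma psi_mono {φ ψ : ℝ≥0∞ → ℝ≥0∞} (hc : ContinuousOn φ (Set.Iic 1))
    (hsm : StrictMonoOn φ (Set.Iic 1)) (hz : φ 0 = 0)
    (hψ : ∀ x ∈ Set.Iic (1:ℝ≥0∞), ψ (φ x) = x) {y y' : ℝ≥0∞}
    (h1 : y ≤ φ 1) (h2 : y' ≤ φ 1) (h : y ≤ y') : ψ y ≤ ψ y' := by
  obtain ⟨hm1, he1⟩ := psi_spec hc hz hψ h1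
  obtain ⟨hm2, he2⟩ := psi_spec hc hz hψ h2
  exact (hsm.le_iff_le hm1 hm2).mp (by rw [he1, he2]; exact h)

lemma psi_biSup {φ ψ : ℝ≥0∞ → ℝ≥0∞} (hc : ContinuousOn φ (Set.Iic 1))
    (hsm : StrictMonoOn φ (Set.Iic 1)) (hz : φ 0 = 0)
    (hψ : ∀ x ∈ Set.Iic (1:ℝ≥0∞), ψ (φ x) = x)
    {A : ℝ≥0∞ → ℝ≥0∞} (hA : ∀ α ∈ Set.Iic (1:ℝ≥0∞), A α ≤ φ 1) :
    ψ (⨆ α ∈ Set.Iic (1:ℝ≥0∞), A α) = ⨆ α ∈ Set.Iic (1:ℝ≥0∞), ψ (A α) := by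
  have hS : (⨆ α ∈ Set.Iic (1:ℝ≥0∞), A α) ≤ φ 1 := iSup₂_le hA
  obtain ⟨hψS, hφψS⟩ := psi_spec hc hz hψ hS
  apply le_antisymm
  · have hV : (⨆ α ∈ Set.Iic (1:ℝ≥0∞), ψ (A α)) ≤ 1 :=
      iSup₂_le fun α hα => (psi_spec hc hz hψ (hA α hα)).1
    have hφV : (⨆ α ∈ Set.Iic (1:ℝ≥0∞), A α) ≤ φ (⨆ α ∈ Set.Iic (1:ℝ≥0∞), ψ (A α)) := by
      refine iSup₂_le fun α hα => ?_
      have := (psi_spec hc hz hψ (hA α hα))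
      calc A α = φ (ψ (A α)) := this.2.symm
        _ ≤ φ (⨆ α ∈ Set.Iic (1:ℝ≥0∞), ψ (A α)) :=
          hsm.monotoneOn this.1 hV (le_iSup₂_of_le α hα le_rfl)
    have := (hsm.le_iff_le hψS hV).mp (by rw [hφψS]; exact hφV)
    exact this
  · exact iSup₂_le fun α hα =>
      psi_mono hc hsm hz hψ (hA α hα) hS (le_iSup₂_of_le α hα le_rfl)

lemma map_biSup_le {h : ℝ≥0∞ → ℝ≥0∞} {x : ℝ≥0∞ → ℝ≥0∞}
    (hcont : ContinuousWithinAt h (Set.Iic (⨆ s ∈ Set.Iic (1:ℝ≥0∞), x s))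
      (⨆ s ∈ Set.Iic (1:ℝ≥0∞), x s)) :
    h (⨆ s ∈ Set.Iic (1:ℝ≥0∞), x s) ≤ ⨆ s ∈ Set.Iic (1:ℝ≥0∞), h (x s) := by
  set S := ⨆ s ∈ Set.Iic (1:ℝ≥0∞), x s with hSdef
  by_cases hmem : ∃ s ∈ Set.Iic (1:ℝ≥0∞), x s = S
  · obtain ⟨s, hs, hxs⟩ := hmem
    rw [← hxs]
    exact le_iSup₂_of_le s hs le_rfl
  · have hTne : (x '' Set.Iic 1).Nonempty := ⟨x 0, ⟨0, by simp, rfl⟩⟩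
    have hSsup : S = sSup (x '' Set.Iic 1) := by rw [sSup_image]
    have hcl : S ∈ closure (x '' Set.Iic 1) := hSsup ▸ sSup_mem_closure hTne
    obtain ⟨u, hu, hlim⟩ := mem_closure_iff_seq_limit.mp hcl
    have hle : ∀ n, u n ≤ S := by
      intro n
      obtain ⟨s, hs, hxs⟩ := hu n
      rw [← hxs]
      exact le_iSup₂_of_le s hs le_rfl
    have hlim' : Tendsto u atTop (𝓝[Set.Iic S] S) :=
      tendsto_nhdsWithin_of_tendsto_nhds_of_eventually_within _ hlim
        (Eventually.of_forall hle)
    have hcomp : Tendsto (fun n => h (u n)) atTop (𝓝 (h S)) := hcont.tendsto.comp hlim'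
    refine le_of_tendsto hcomp (Eventually.of_forall fun n => ?_)
    obtain ⟨s, hs, hxs⟩ := hu n
    rw [← hxs]
    exact le_iSup₂_of_le s hs le_rfl

lemma oti_zero_le {oti : ℝ≥0∞ → ℝ≥0∞ → ℝ≥0∞}
    (hmono : Mono2On oti (Set.Iic 1) (Set.Iic 1)) (hz : oti 0 1 = 0)
    {t : ℝ≥0∞} (ht : t ≤ 1) : oti 0 t ≤ 0 := by
  have := hmono (Set.mem_Iic.mpr zero_le) (Set.mem_Iic.mpr ht)
    (Set.mem_Iic.mpr zero_le) (Set.mem_Iic.mpr le_rfl) le_rfl ht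
  rwa [hz] at this

lemma qChar {Y : Type} (oti : ℝ≥0∞ → ℝ≥0∞ → ℝ≥0∞) (m : Set Y → ℝ≥0∞)
    (hm0 : m ∅ = 0) (hm1 : m Set.univ = 1)
    (hmono : Mono2On oti (Set.Iic 1) (Set.Iic 1)) (h01 : oti 0 1 = 0) (h10 : oti 1 0 = 0)
    (E : Set Y) {e p : ℝ≥0∞} (hme : m E = e) (he : e ≤ 1) (hp : p ≤ 1) :
    qInt oti m (E.indicator fun _ => p) = oti e p := by
  unfold qInt
  apply le_antisymm
  · refine iSup₂_le fun t ht => ?_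
    rcases eq_or_ne t 0 with rfl | ht0
    · have hset : {x : Y | (0:ℝ≥0∞) ≤ E.indicator (fun _ => p) x} = Set.univ := by
        ext x; simp
      rw [hset, hm1, h10]
      exact zero_le
    by_cases htp : t ≤ p
    · have hset : {x : Y | t ≤ E.indicator (fun _ => p) x} = E := by
        ext x
        by_cases hx : x ∈ E <;>
          simp [Set.indicator_of_mem, Set.indicator_of_notMem, hx, htp, le_zero_iff, ht0]
      rw [hset, hme]
      exact hmono (Set.mem_Iic.mpr he) (Set.mem_Iic.mpr ht) (Set.mem_Iic.mpr he)
        (Set.mem_Iic.mpr hp) le_rfl htp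
    · have hset : {x : Y | t ≤ E.indicator (fun _ => p) x} = ∅ := by
        ext x
        by_cases hx : x ∈ E <;>
          simp [Set.indicator_of_mem, Set.indicator_of_notMem, hx, htp, le_zero_iff, ht0]
      rw [hset, hm0]
      exact (oti_zero_le hmono h01 ht).trans zero_le
  · rcases eq_or_ne p 0 with rfl | hp0
    · have : oti e 0 ≤ 0 := by
        have := hmono (Set.mem_Iic.mpr he) (Set.mem_Iic.mpr zero_le)
          (Set.mem_Iic.mpr le_rfl) (Set.mem_Iic.mpr zero_le) he le_rfl
        rwa [h10] at this
      exact this.trans zero_le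
    · have hset : {x : Y | p ≤ E.indicator (fun _ => p) x} = E := by
        ext x
        by_cases hx : x ∈ E <;>
          simp [Set.indicator_of_mem, Set.indicator_of_notMem, hx, le_zero_iff, hp0]
      exact le_iSup₂_of_le p (Set.mem_Iic.mpr hp) (le_of_eq (by rw [hset, hme]))

lemma qInt_reparam {Y : Type*} {oti : ℝ≥0∞ → ℝ≥0∞ → ℝ≥0∞} (m : Set Y → ℝ≥0∞) (hm0 : m ∅ = 0)
    (hmono : Mono2On oti (Set.Iic 1) (Set.Iic 1)) (h01 : oti 0 1 = 0)
    {φ : ℝ≥0∞ → ℝ≥0∞} (hmaps : Set.MapsTo φ (Set.Iic 1) (Set.Iic 1))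
    (hc : ContinuousOn φ (Set.Iic 1)) (hsm : StrictMonoOn φ (Set.Iic 1)) (hz : φ 0 = 0)
    {k : Y → ℝ≥0∞} (hk : ∀ x, k x ≤ 1) :
    qInt oti m (fun x => φ (k x)) = ⨆ s ∈ Set.Iic (1:ℝ≥0∞), oti (m {x | s ≤ k x}) (φ s) := by
  unfold qInt
  apply le_antisymm
  · refine iSup₂_le fun t ht => ?_
    by_cases htφ : t ≤ φ 1
    · obtain ⟨s, hs, hst⟩ := phi_surj hc hz htφ
      have hset : {x | t ≤ φ (k x)} = {x | s ≤ k x} := by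
        ext x
        simp only [Set.mem_setOf_eq, ← hst]
        exact hsm.le_iff_le (Set.mem_Iic.mpr hs) (Set.mem_Iic.mpr (hk x))
      rw [hset, ← hst]
      exact le_iSup₂_of_le s (Set.mem_Iic.mpr hs) le_rfl
    · have hset : {x | t ≤ φ (k x)} = ∅ := by
        ext x
        simp only [Set.mem_setOf_eq, Set.mem_empty_iff_false, iff_false, not_le]
        exact lt_of_le_of_lt (hsm.monotoneOn (Set.mem_Iic.mpr (hk x))
          (Set.mem_Iic.mpr le_rfl) (hk x)) (lt_of_not_ge htφ)
      rw [hset, hm0]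
      exact (oti_zero_le hmono h01 ht).trans zero_le
  · refine iSup₂_le fun s hs => ?_
    have hset : {x | φ s ≤ φ (k x)} = {x | s ≤ k x} := by
      ext x
      simp only [Set.mem_setOf_eq]
      exact hsm.le_iff_le hs (Set.mem_Iic.mpr (hk x))
    exact le_iSup₂_of_le (φ s) (hmaps hs) (le_of_eq (by rw [hset]))

lemma qInt_le_phi_one {Y : Type*} {oti : ℝ≥0∞ → ℝ≥0∞ → ℝ≥0∞} (m : Set Y → ℝ≥0∞)
    (hm0 : m ∅ = 0)
    (hmono : Mono2On oti (Set.Iic 1) (Set.Iic 1)) (h01 : oti 0 1 = 0)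
    {φ : ℝ≥0∞ → ℝ≥0∞} (hmaps : Set.MapsTo φ (Set.Iic 1) (Set.Iic 1))
    (hc : ContinuousOn φ (Set.Iic 1)) (hsm : StrictMonoOn φ (Set.Iic 1)) (hz : φ 0 = 0)
    (hbd : oti 1 (φ 1) ≤ φ 1)
    {k : Y → ℝ≥0∞} (hk : ∀ x, k x ≤ 1)
    (hmk : ∀ s ∈ Set.Iic (1:ℝ≥0∞), m {x | s ≤ k x} ≤ 1) :
    qInt oti m (fun x => φ (k x)) ≤ φ 1 := by
  rw [qInt_reparam m hm0 hmono h01 hmaps hc hsm hz hk]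
  refine iSup₂_le fun s hs => le_trans ?_ hbd
  exact hmono (Set.mem_Iic.mpr (hmk s hs)) (hmaps hs) (Set.mem_Iic.mpr le_rfl)
    (hmaps (Set.mem_Iic.mpr le_rfl)) (hmk s hs)
    (hsm.monotoneOn hs (Set.mem_Iic.mpr le_rfl) hs)

lemma comono_chain {Y : Type*} {f g : Y → ℝ≥0∞} (hcom : ComonotoneOn Set.univ f g)
    (x y : Y) : (f x ≤ f y ∧ g x ≤ g y) ∨ (f y ≤ f x ∧ g y ≤ g x) := by
  rcases le_total (f x) (f y) with h | h
  · rcases le_total (g x) (g y) with h' | h'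
    · exact Or.inl ⟨h, h'⟩
    · rcases eq_or_lt_of_le h with he | hlt
      · exact Or.inr ⟨he.ge, h'⟩
      · exact Or.inl ⟨h, hcom x (Set.mem_univ x) y (Set.mem_univ y) hlt⟩
  · rcases le_total (g y) (g x) with h' | h'
    · exact Or.inr ⟨h, h'⟩
    · rcases eq_or_lt_of_le h with he | hlt
      · exact Or.inl ⟨he.ge, h'⟩
      · exact Or.inr ⟨h, hcom y (Set.mem_univ y) x (Set.mem_univ x) hlt⟩

lemma meas_superlevel_star {Y : Type} [MeasurableSpace Y]
    {star : ℝ≥0∞ → ℝ≥0∞ → ℝ≥0∞} (hmono : Mono2On star (Set.Iic 1) (Set.Iic 1))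
    {f g : Y → ℝ≥0∞} (hf : Measurable f) (hg : Measurable g)
    (hf1 : ∀ x, f x ≤ 1) (hg1 : ∀ x, g x ≤ 1) (hcom : ComonotoneOn Set.univ f g)
    (r : ℝ≥0∞) : MeasurableSet {x | r ≤ star (f x) (g x)} := by
  set T := {x | r ≤ star (f x) (g x)} with hT
  rcases Set.eq_empty_or_nonempty T with hTe | hTne
  · rw [hTe]; exact MeasurableSet.empty
  set c : Y → ℝ≥0∞ := fun x => f x + g x with hc
  have hcm : Measurable c := hf.add hg
  set θ := sInf (c '' T) with hθ
  have hub : ∀ x ∈ T, θ ≤ c x := fun x hx => sInf_le (Set.mem_image_of_mem c hx)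
  have hmem : ∀ y, θ < c y → y ∈ T := by
    intro y hy
    obtain ⟨_, ⟨x, hx, rfl⟩, hlt⟩ := sInf_lt_iff.mp hy
    rcases comono_chain hcom x y with ⟨h1, h2⟩ | ⟨h1, h2⟩
    · exact le_trans hx (hmono (Set.mem_Iic.mpr (hf1 x)) (Set.mem_Iic.mpr (hg1 x))
        (Set.mem_Iic.mpr (hf1 y)) (Set.mem_Iic.mpr (hg1 y)) h1 h2)
    · exact absurd (add_le_add h1 h2) (not_le.mpr hlt)
  have heqfg : ∀ x y : Y, c x = c y → f x = f y ∧ g x = g y := by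
    have key : ∀ x y : Y, f x ≤ f y → g x ≤ g y → c x = c y → f x = f y ∧ g x = g y := by
      intro x y h1 h2 hxy
      have hgt : g x ≠ ∞ := ((hg1 x).trans_lt (by norm_num)).ne
      have hft : f x ≠ ∞ := ((hf1 x).trans_lt (by norm_num)).ne
      constructor
      · by_contra hne
        have hlt : f x < f y := lt_of_le_of_ne h1 hne
        have : c x < c y :=
          lt_of_lt_of_le (ENNReal.add_lt_add_right hgt hlt) (add_le_add_right h2 _)
        exact absurd hxy this.ne
      · by_contra hne
        have hlt : g x < g y := lt_of_le_of_ne h2 hne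
        have : c x < c y :=
          lt_of_lt_of_le (ENNReal.add_lt_add_left hft hlt) (add_le_add_left h1 _)
        exact absurd hxy this.ne
    intro x y hxy
    rcases comono_chain hcom x y with ⟨h1, h2⟩ | ⟨h1, h2⟩
    · exact key x y h1 h2 hxy
    · obtain ⟨hh1, hh2⟩ := key y x h1 h2 hxy.symm
      exact ⟨hh1.symm, hh2.symm⟩
  by_cases hw : ∃ x ∈ T, c x = θ
  · have hTeq : T = c ⁻¹' Set.Ici θ := by
      ext y
      constructor
      · exact fun hy => hub y hy
      · intro hy
        have hy' : θ ≤ c y := hy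
        rcases eq_or_lt_of_le hy' with he | hlt
        · obtain ⟨x₀, hx₀, hcx₀⟩ := hw
          obtain ⟨hfe, hge⟩ := heqfg x₀ y (hcx₀.trans he)
          have : r ≤ star (f x₀) (g x₀) := hx₀
          rwa [hfe, hge] at this
        · exact hmem y hlt
    rw [hTeq]
    exact hcm measurableSet_Ici
  · have hTeq : T = c ⁻¹' Set.Ioi θ := by
      ext y
      constructor
      · intro hy
        rcases eq_or_lt_of_le (hub y hy) with he | hlt
        · exact absurd ⟨y, hy, he.symm⟩ hw
        · exact hlt
      · exact fun hy => hmem y hy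
    rw [hTeq]
    exact hcm measurableSet_Ioi

theorem statement6
    (oti star : ℝ≥0∞ → ℝ≥0∞ → ℝ≥0∞)
    (hoti_maps : ∀ a ∈ Set.Iic (1 : ℝ≥0∞), ∀ b ∈ Set.Iic (1 : ℝ≥0∞), oti a b ∈ Set.Iic 1)
    (hoti_mono : Mono2On oti (Set.Iic 1) (Set.Iic 1))
    (hoti_one : oti 1 1 = 1)
    (hoti_zero : oti 0 1 = 0 ∧ oti 1 0 = 0 ∧ oti 0 0 = 0)
    (hstar_maps : ∀ a ∈ Set.Iic (1 : ℝ≥0∞), ∀ b ∈ Set.Iic (1 : ℝ≥0∞), star a b ∈ Set.Iic 1)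
    (hstar_mono : Mono2On star (Set.Iic 1) (Set.Iic 1))
    (hstar_lc : LeftCont2On star (Set.Iic 1) (Set.Iic 1))
    (hstar_zero : star 1 0 = 0 ∧ star 0 1 = 0)
    (φ₁ φ₂ φ₃ ψ₁ ψ₂ ψ₃ : ℝ≥0∞ → ℝ≥0∞)
    (hφ₁_maps : Set.MapsTo φ₁ (Set.Iic 1) (Set.Iic 1))
    (hφ₁_cont : ContinuousOn φ₁ (Set.Iic 1)) (hφ₁_mono : StrictMonoOn φ₁ (Set.Iic 1))
    (hφ₁_zero : φ₁ 0 = 0) (hφ₁_bd : oti 1 (φ₁ 1) ≤ φ₁ 1)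
    (hφ₂_maps : Set.MapsTo φ₂ (Set.Iic 1) (Set.Iic 1))
    (hφ₂_cont : ContinuousOn φ₂ (Set.Iic 1)) (hφ₂_mono : StrictMonoOn φ₂ (Set.Iic 1))
    (hφ₂_zero : φ₂ 0 = 0) (hφ₂_bd : oti 1 (φ₂ 1) ≤ φ₂ 1)
    (hφ₃_maps : Set.MapsTo φ₃ (Set.Iic 1) (Set.Iic 1))
    (hφ₃_cont : ContinuousOn φ₃ (Set.Iic 1)) (hφ₃_mono : StrictMonoOn φ₃ (Set.Iic 1))
    (hφ₃_zero : φ₃ 0 = 0) (hφ₃_bd : oti 1 (φ₃ 1) ≤ φ₃ 1)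
    (hψ₁_inv : ∀ x ∈ Set.Iic (1 : ℝ≥0∞), ψ₁ (φ₁ x) = x)
    (hψ₁_inv' : ∀ y ∈ Set.Iic (φ₁ 1), φ₁ (ψ₁ y) = y)
    (hψ₂_inv : ∀ x ∈ Set.Iic (1 : ℝ≥0∞), ψ₂ (φ₂ x) = x)
    (hψ₂_inv' : ∀ y ∈ Set.Iic (φ₂ 1), φ₂ (ψ₂ y) = y)
    (hψ₃_inv : ∀ x ∈ Set.Iic (1 : ℝ≥0∞), ψ₃ (φ₃ x) = x)
    (hψ₃_inv' : ∀ y ∈ Set.Iic (φ₃ 1), φ₃ (ψ₃ y) = y) :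
    (∀ a ∈ Set.Iic (1 : ℝ≥0∞), ∀ b ∈ Set.Iic (1 : ℝ≥0∞), ∀ c ∈ Set.Iic (1 : ℝ≥0∞),
      max (star (ψ₂ (oti a (φ₂ b))) (ψ₃ (oti 1 (φ₃ c))))
          (star (ψ₂ (oti 1 (φ₂ b))) (ψ₃ (oti a (φ₃ c))))
        ≤ ψ₁ (oti a (φ₁ (star b c))))
    ↔
    (∀ (Y : Type) [MeasurableSpace Y], ∀ m : Set Y → ℝ≥0∞, IsCapacity m →
      ∀ f g : Y → ℝ≥0∞, Measurable f → Measurable g →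
        (∀ x, f x ≤ 1) → (∀ x, g x ≤ 1) → ComonotoneOn Set.univ f g →
          star (ψ₂ (qInt oti m fun x => φ₂ (f x))) (ψ₃ (qInt oti m fun x => φ₃ (g x)))
            ≤ ψ₁ (qInt oti m fun x => φ₁ (star (f x) (g x)))) := by
  have mem1 : (1:ℝ≥0∞) ∈ Set.Iic (1:ℝ≥0∞) := Set.mem_Iic.mpr le_rfl
  constructor
  · -- (i) → (ii)
    intro hi Y _ m hcap f g hf hg hf1 hg1 hcom
    obtain ⟨hm0, hm1, hmmono⟩ := hcap
    have hmA : ∀ A : Set Y, MeasurableSet A → m A ≤ 1 := fun A hA =>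
      hm1 ▸ hmmono hA MeasurableSet.univ (Set.subset_univ A)
    have hmf : ∀ s : ℝ≥0∞, MeasurableSet {x | s ≤ f x} := fun s => hf measurableSet_Ici
    have hmg : ∀ s : ℝ≥0∞, MeasurableSet {x | s ≤ g x} := fun s => hg measurableSet_Ici
    have hT : ∀ r, MeasurableSet {x | r ≤ star (f x) (g x)} :=
      meas_superlevel_star hstar_mono hf hg hf1 hg1 hcom
    have hh1 : ∀ x, star (f x) (g x) ≤ 1 := fun x =>
      Set.mem_Iic.mp (hstar_maps _ (Set.mem_Iic.mpr (hf1 x)) _ (Set.mem_Iic.mpr (hg1 x)))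
    have hA_le : ∀ α ∈ Set.Iic (1:ℝ≥0∞), oti (m {x | α ≤ f x}) (φ₂ α) ≤ φ₂ 1 := fun α hα =>
      (hoti_mono (Set.mem_Iic.mpr (hmA _ (hmf α))) (hφ₂_maps hα) mem1 (hφ₂_maps mem1)
        (hmA _ (hmf α)) (hφ₂_mono.monotoneOn hα mem1 (Set.mem_Iic.mp hα))).trans hφ₂_bd
    have hB_le : ∀ β ∈ Set.Iic (1:ℝ≥0∞), oti (m {x | β ≤ g x}) (φ₃ β) ≤ φ₃ 1 := fun β hβ =>
      (hoti_mono (Set.mem_Iic.mpr (hmA _ (hmg β))) (hφ₃_maps hβ) mem1 (hφ₃_maps mem1)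
        (hmA _ (hmg β)) (hφ₃_mono.monotoneOn hβ mem1 (Set.mem_Iic.mp hβ))).trans hφ₃_bd
    have hE2 : qInt oti m (fun x => φ₂ (f x)) =
        ⨆ α ∈ Set.Iic (1:ℝ≥0∞), oti (m {x | α ≤ f x}) (φ₂ α) :=
      qInt_reparam m hm0 hoti_mono hoti_zero.1 hφ₂_maps hφ₂_cont hφ₂_mono hφ₂_zero hf1
    have hE3 : qInt oti m (fun x => φ₃ (g x)) =
        ⨆ β ∈ Set.Iic (1:ℝ≥0∞), oti (m {x | β ≤ g x}) (φ₃ β) :=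
      qInt_reparam m hm0 hoti_mono hoti_zero.1 hφ₃_maps hφ₃_cont hφ₃_mono hφ₃_zero hg1
    have hψ2A : ∀ α ∈ Set.Iic (1:ℝ≥0∞), ψ₂ (oti (m {x | α ≤ f x}) (φ₂ α)) ≤ 1 :=
      fun α hα => (psi_spec hφ₂_cont hφ₂_zero hψ₂_inv (hA_le α hα)).1
    have hψ3B : ∀ β ∈ Set.Iic (1:ℝ≥0∞), ψ₃ (oti (m {x | β ≤ g x}) (φ₃ β)) ≤ 1 :=
      fun β hβ => (psi_spec hφ₃_cont hφ₃_zero hψ₃_inv (hB_le β hβ)).1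
    have hS2 : (⨆ α ∈ Set.Iic (1:ℝ≥0∞), ψ₂ (oti (m {x | α ≤ f x}) (φ₂ α))) ≤ 1 :=
      iSup₂_le hψ2A
    have hS3 : (⨆ β ∈ Set.Iic (1:ℝ≥0∞), ψ₃ (oti (m {x | β ≤ g x}) (φ₃ β))) ≤ 1 :=
      iSup₂_le hψ3B
    have hR_le : qInt oti m (fun x => φ₁ (star (f x) (g x))) ≤ φ₁ 1 :=
      qInt_le_phi_one m hm0 hoti_mono hoti_zero.1 hφ₁_maps hφ₁_cont hφ₁_mono hφ₁_zero
        hφ₁_bd hh1 (fun σ _ => hmA _ (hT σ))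
    have hcore : ∀ α ∈ Set.Iic (1:ℝ≥0∞), ∀ β ∈ Set.Iic (1:ℝ≥0∞),
        star (ψ₂ (oti (m {x | α ≤ f x}) (φ₂ α))) (ψ₃ (oti (m {x | β ≤ g x}) (φ₃ β)))
          ≤ ψ₁ (qInt oti m (fun x => φ₁ (star (f x) (g x)))) := by
      intro α hα β hβ
      have hs1 : star α β ≤ 1 := Set.mem_Iic.mp (hstar_maps α hα β hβ)
      have ht₀1 : φ₁ (star α β) ≤ 1 := Set.mem_Iic.mp (hφ₁_maps (Set.mem_Iic.mpr hs1))
      have hsetT : {x | φ₁ (star α β) ≤ φ₁ (star (f x) (g x))}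
          = {x | star α β ≤ star (f x) (g x)} := by
        ext x
        exact hφ₁_mono.le_iff_le (Set.mem_Iic.mpr hs1) (Set.mem_Iic.mpr (hh1 x))
      have hterm : oti (m {x | star α β ≤ star (f x) (g x)}) (φ₁ (star α β))
          ≤ qInt oti m (fun x => φ₁ (star (f x) (g x))) := by
        refine le_iSup₂_of_le (φ₁ (star α β)) (Set.mem_Iic.mpr ht₀1) (le_of_eq ?_)
        rw [hsetT]
      have hmT1 : m {x | star α β ≤ star (f x) (g x)} ≤ 1 := hmA _ (hT _)
      have hoat : ∀ a' : ℝ≥0∞, a' ≤ 1 → oti a' (φ₁ (star α β)) ≤ φ₁ 1 := fun a' ha' =>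
        (hoti_mono (Set.mem_Iic.mpr ha') (Set.mem_Iic.mpr ht₀1) mem1 (hφ₁_maps mem1) ha'
          (hφ₁_mono.monotoneOn (Set.mem_Iic.mpr hs1) mem1 hs1)).trans hφ₁_bd
      rcases (by
        by_cases hsub : {x | α ≤ f x} ⊆ {x | β ≤ g x}
        · exact Or.inl hsub
        · obtain ⟨x, hx1, hx2⟩ := Set.not_subset.mp hsub
          refine Or.inr fun y hy => ?_
          have hgxy : g x < g y := lt_of_lt_of_le (lt_of_not_ge hx2) hy
          have hfxy : f x ≤ f y := by
            by_contra hlt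
            exact absurd (hcom y (Set.mem_univ y) x (Set.mem_univ x) (lt_of_not_ge hlt))
              (not_le.mpr hgxy)
          exact le_trans hx1 hfxy :
        {x | α ≤ f x} ⊆ {x | β ≤ g x} ∨ {x | β ≤ g x} ⊆ {x | α ≤ f x}) with hsub | hsub
      · -- {α ≤ f} ⊆ {β ≤ g}
        have ha1 : m {x | α ≤ f x} ≤ 1 := hmA _ (hmf α)
        have hsubT : {x | α ≤ f x} ⊆ {x | star α β ≤ star (f x) (g x)} := fun x hx =>
          hstar_mono hα hβ (Set.mem_Iic.mpr (hf1 x)) (Set.mem_Iic.mpr (hg1 x)) hx (hsub hx)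
        have haT : m {x | α ≤ f x} ≤ m {x | star α β ≤ star (f x) (g x)} :=
          hmmono (hmf α) (hT _) hsubT
        have key := hi (m {x | α ≤ f x}) (Set.mem_Iic.mpr ha1) α hα β hβ
        have hmid : star (ψ₂ (oti (m {x | α ≤ f x}) (φ₂ α)))
              (ψ₃ (oti (m {x | β ≤ g x}) (φ₃ β)))
            ≤ star (ψ₂ (oti (m {x | α ≤ f x}) (φ₂ α))) (ψ₃ (oti 1 (φ₃ β))) := by
          have h13 : oti 1 (φ₃ β) ≤ φ₃ 1 :=
            (hoti_mono mem1 (hφ₃_maps hβ) mem1 (hφ₃_maps mem1) le_rfl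
              (hφ₃_mono.monotoneOn hβ mem1 (Set.mem_Iic.mp hβ))).trans hφ₃_bd
          have hBle : oti (m {x | β ≤ g x}) (φ₃ β) ≤ oti 1 (φ₃ β) :=
            hoti_mono (Set.mem_Iic.mpr (hmA _ (hmg β))) (hφ₃_maps hβ) mem1 (hφ₃_maps hβ)
              (hmA _ (hmg β)) le_rfl
          exact hstar_mono (Set.mem_Iic.mpr (hψ2A α hα)) (Set.mem_Iic.mpr (hψ3B β hβ))
            (Set.mem_Iic.mpr (hψ2A α hα))
            (Set.mem_Iic.mpr (psi_spec hφ₃_cont hφ₃_zero hψ₃_inv h13).1) le_rfl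
            (psi_mono hφ₃_cont hφ₃_mono hφ₃_zero hψ₃_inv (hB_le β hβ) h13 hBle)
        have hfin : ψ₁ (oti (m {x | α ≤ f x}) (φ₁ (star α β)))
            ≤ ψ₁ (qInt oti m (fun x => φ₁ (star (f x) (g x)))) := by
          refine psi_mono hφ₁_cont hφ₁_mono hφ₁_zero hψ₁_inv (hoat _ ha1) hR_le ?_
          exact le_trans (hoti_mono (Set.mem_Iic.mpr ha1) (Set.mem_Iic.mpr ht₀1)
            (Set.mem_Iic.mpr hmT1) (Set.mem_Iic.mpr ht₀1) haT le_rfl) hterm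
        exact le_trans hmid (le_trans (le_trans (le_max_left _ _) key) hfin)
      · -- {β ≤ g} ⊆ {α ≤ f}
        have ha1 : m {x | β ≤ g x} ≤ 1 := hmA _ (hmg β)
        have hsubT : {x | β ≤ g x} ⊆ {x | star α β ≤ star (f x) (g x)} := fun x hx =>
          hstar_mono hα hβ (Set.mem_Iic.mpr (hf1 x)) (Set.mem_Iic.mpr (hg1 x)) (hsub hx) hx
        have haT : m {x | β ≤ g x} ≤ m {x | star α β ≤ star (f x) (g x)} :=
          hmmono (hmg β) (hT _) hsubT
        have key := hi (m {x | β ≤ g x}) (Set.mem_Iic.mpr ha1) α hα β hβ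
        have hmid : star (ψ₂ (oti (m {x | α ≤ f x}) (φ₂ α)))
              (ψ₃ (oti (m {x | β ≤ g x}) (φ₃ β)))
            ≤ star (ψ₂ (oti 1 (φ₂ α))) (ψ₃ (oti (m {x | β ≤ g x}) (φ₃ β))) := by
          have h12 : oti 1 (φ₂ α) ≤ φ₂ 1 :=
            (hoti_mono mem1 (hφ₂_maps hα) mem1 (hφ₂_maps mem1) le_rfl
              (hφ₂_mono.monotoneOn hα mem1 (Set.mem_Iic.mp hα))).trans hφ₂_bd
          have hAle : oti (m {x | α ≤ f x}) (φ₂ α) ≤ oti 1 (φ₂ α) :=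
            hoti_mono (Set.mem_Iic.mpr (hmA _ (hmf α))) (hφ₂_maps hα) mem1 (hφ₂_maps hα)
              (hmA _ (hmf α)) le_rfl
          exact hstar_mono (Set.mem_Iic.mpr (hψ2A α hα)) (Set.mem_Iic.mpr (hψ3B β hβ))
            (Set.mem_Iic.mpr (psi_spec hφ₂_cont hφ₂_zero hψ₂_inv h12).1)
            (Set.mem_Iic.mpr (hψ3B β hβ))
            (psi_mono hφ₂_cont hφ₂_mono hφ₂_zero hψ₂_inv (hA_le α hα) h12 hAle) le_rfl
        have hfin : ψ₁ (oti (m {x | β ≤ g x}) (φ₁ (star α β)))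
            ≤ ψ₁ (qInt oti m (fun x => φ₁ (star (f x) (g x)))) := by
          refine psi_mono hφ₁_cont hφ₁_mono hφ₁_zero hψ₁_inv (hoat _ ha1) hR_le ?_
          exact le_trans (hoti_mono (Set.mem_Iic.mpr ha1) (Set.mem_Iic.mpr ht₀1)
            (Set.mem_Iic.mpr hmT1) (Set.mem_Iic.mpr ht₀1) haT le_rfl) hterm
        exact le_trans hmid (le_trans (le_trans (le_max_right _ _) key) hfin)
    rw [hE2, hE3, psi_biSup hφ₂_cont hφ₂_mono hφ₂_zero hψ₂_inv hA_le,
        psi_biSup hφ₃_cont hφ₃_mono hφ₃_zero hψ₃_inv hB_le]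
    calc star (⨆ α ∈ Set.Iic (1:ℝ≥0∞), ψ₂ (oti (m {x | α ≤ f x}) (φ₂ α)))
          (⨆ β ∈ Set.Iic (1:ℝ≥0∞), ψ₃ (oti (m {x | β ≤ g x}) (φ₃ β)))
        ≤ ⨆ α ∈ Set.Iic (1:ℝ≥0∞), star (ψ₂ (oti (m {x | α ≤ f x}) (φ₂ α)))
            (⨆ β ∈ Set.Iic (1:ℝ≥0∞), ψ₃ (oti (m {x | β ≤ g x}) (φ₃ β))) :=
          map_biSup_le (hstar_lc.1 _ (Set.mem_Iic.mpr hS3) _ (Set.mem_Iic.mpr hS2))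
      _ ≤ ψ₁ (qInt oti m (fun x => φ₁ (star (f x) (g x)))) := by
          refine iSup₂_le fun α hα => ?_
          refine le_trans (map_biSup_le (hstar_lc.2 _ (Set.mem_Iic.mpr (hψ2A α hα)) _
            (Set.mem_Iic.mpr hS3))) ?_
          exact iSup₂_le fun β hβ => hcore α hα β hβ
  · -- (ii) → (i)
    intro hii a ha b hb c hc
    classical
    have ha1 : a ≤ 1 := Set.mem_Iic.mp ha
    have hb1 : b ≤ 1 := Set.mem_Iic.mp hb
    have hc1 : c ≤ 1 := Set.mem_Iic.mp hc
    set m : Set Bool → ℝ≥0∞ := fun S => if S = ∅ then 0 else if S = Set.univ then 1 else a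
      with hmdef
    have hm0 : m ∅ = 0 := by
      simp [hmdef]
    have hunene : (Set.univ : Set Bool) ≠ ∅ :=
      Set.nonempty_iff_ne_empty.mp Set.univ_nonempty
    have hmuniv : m Set.univ = 1 := by
      simp only [hmdef]
      rw [if_neg hunene]
      simp
    have hmono' : ∀ ⦃A B : Set Bool⦄, A ⊆ B → m A ≤ m B := by
      intro A B hAB
      by_cases hA : A = ∅
      · simp only [hmdef]
        rw [if_pos hA]
        exact zero_le
      · have hB : B ≠ ∅ := fun h => hA (Set.subset_empty_iff.mp (h ▸ hAB))
        by_cases hBu : B = Set.univ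
        · have hmB : m B = 1 := by
            simp only [hmdef]; rw [if_neg hB, if_pos hBu]
          have hmA' : m A ≤ 1 := by
            simp only [hmdef]; split_ifs <;> simp [ha1]
          rw [hmB]; exact hmA'
        · have hAu : A ≠ Set.univ := fun h => hBu (Set.univ_subset_iff.mp (h ▸ hAB))
          simp only [hmdef]
          rw [if_neg hA, if_neg hAu, if_neg hB, if_neg hBu]
    have hcap : IsCapacity m := ⟨hm0, hmuniv, fun A B _ _ hAB => hmono' hAB⟩
    have hmeas : ∀ h : Bool → ℝ≥0∞, Measurable h := fun h t _ =>
      MeasurableSpace.measurableSet_top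
    have hmE : m ({true} : Set Bool) = a := by
      have h1 : ({true} : Set Bool) ≠ ∅ := Set.singleton_ne_empty _
      have h2 : ({true} : Set Bool) ≠ Set.univ := by
        intro h
        have : false ∈ ({true} : Set Bool) := h ▸ Set.mem_univ false
        simp at this
      simp only [hmdef]
      rw [if_neg h1, if_neg h2]
    have hstar0c : star 0 c = 0 := le_antisymm (by
      have := hstar_mono (Set.mem_Iic.mpr zero_le) hc (Set.mem_Iic.mpr zero_le)
        mem1 le_rfl hc1
      rwa [hstar_zero.2] at this) zero_le
    have hstarb0 : star b 0 = 0 := le_antisymm (by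
      have := hstar_mono hb (Set.mem_Iic.mpr zero_le) mem1 (Set.mem_Iic.mpr zero_le)
        hb1 le_rfl
      rwa [hstar_zero.1] at this) zero_le
    have hbc1 : star b c ≤ 1 := Set.mem_Iic.mp (hstar_maps b hb c hc)
    refine max_le ?_ ?_
    · -- left component : f = b·1_{true}, g = const c
      set f₁ : Bool → ℝ≥0∞ := ({true} : Set Bool).indicator (fun _ => b) with hf₁def
      set g₁ : Bool → ℝ≥0∞ := fun _ => c with hg₁def
      have hf₁1 : ∀ x, f₁ x ≤ 1 := by
        intro x
        by_cases hx : x ∈ ({true} : Set Bool) <;>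
          simp [hf₁def, Set.indicator_of_mem, Set.indicator_of_notMem, -Set.indicator_singleton, hx, hb1]
      have hcomon : ComonotoneOn Set.univ f₁ g₁ := fun x _ y _ _ => le_rfl
      have h2 : qInt oti m (fun x => φ₂ (f₁ x)) = oti a (φ₂ b) := by
        have heq : (fun x => φ₂ (f₁ x)) = ({true} : Set Bool).indicator (fun _ => φ₂ b) := by
          funext x
          by_cases hx : x ∈ ({true} : Set Bool) <;>
            simp [hf₁def, Set.indicator_of_mem, Set.indicator_of_notMem, -Set.indicator_singleton, hx, hφ₂_zero]
        rw [heq]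
        exact qChar oti m hm0 hmuniv hoti_mono hoti_zero.1 hoti_zero.2.1 _ hmE ha1
          (Set.mem_Iic.mp (hφ₂_maps hb))
      have h3 : qInt oti m (fun x => φ₃ (g₁ x)) = oti 1 (φ₃ c) := by
        have heq : (fun x => φ₃ (g₁ x)) = (Set.univ : Set Bool).indicator (fun _ => φ₃ c) := by
          funext x; simp [hg₁def]
        rw [heq]
        exact qChar oti m hm0 hmuniv hoti_mono hoti_zero.1 hoti_zero.2.1 _ hmuniv le_rfl
          (Set.mem_Iic.mp (hφ₃_maps hc))
      have h1 : qInt oti m (fun x => φ₁ (star (f₁ x) (g₁ x))) = oti a (φ₁ (star b c)) := by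
        have heq : (fun x => φ₁ (star (f₁ x) (g₁ x)))
            = ({true} : Set Bool).indicator (fun _ => φ₁ (star b c)) := by
          funext x
          by_cases hx : x ∈ ({true} : Set Bool) <;>
            simp [hf₁def, hg₁def, Set.indicator_of_mem, Set.indicator_of_notMem, -Set.indicator_singleton, hx,
              hstar0c, hφ₁_zero]
        rw [heq]
        exact qChar oti m hm0 hmuniv hoti_mono hoti_zero.1 hoti_zero.2.1 _ hmE ha1
          (Set.mem_Iic.mp (hφ₁_maps (Set.mem_Iic.mpr hbc1)))
      have := hii Bool m hcap f₁ g₁ (hmeas f₁) (hmeas g₁) hf₁1 (fun _ => hc1) hcomon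
      rwa [h1, h2, h3] at this
    · -- right component : f = const b, g = c·1_{true}
      set f₁ : Bool → ℝ≥0∞ := fun _ => b with hf₁def
      set g₁ : Bool → ℝ≥0∞ := ({true} : Set Bool).indicator (fun _ => c) with hg₁def
      have hg₁1 : ∀ x, g₁ x ≤ 1 := by
        intro x
        by_cases hx : x ∈ ({true} : Set Bool) <;>
          simp [hg₁def, Set.indicator_of_mem, Set.indicator_of_notMem, -Set.indicator_singleton, hx, hc1]
      have hcomon : ComonotoneOn Set.univ f₁ g₁ := fun x _ y _ hlt => absurd hlt (lt_irrefl _)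
      have h2 : qInt oti m (fun x => φ₂ (f₁ x)) = oti 1 (φ₂ b) := by
        have heq : (fun x => φ₂ (f₁ x)) = (Set.univ : Set Bool).indicator (fun _ => φ₂ b) := by
          funext x; simp [hf₁def]
        rw [heq]
        exact qChar oti m hm0 hmuniv hoti_mono hoti_zero.1 hoti_zero.2.1 _ hmuniv le_rfl
          (Set.mem_Iic.mp (hφ₂_maps hb))
      have h3 : qInt oti m (fun x => φ₃ (g₁ x)) = oti a (φ₃ c) := by
        have heq : (fun x => φ₃ (g₁ x)) = ({true} : Set Bool).indicator (fun _ => φ₃ c) := by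
          funext x
          by_cases hx : x ∈ ({true} : Set Bool) <;>
            simp [hg₁def, Set.indicator_of_mem, Set.indicator_of_notMem, -Set.indicator_singleton, hx, hφ₃_zero]
        rw [heq]
        exact qChar oti m hm0 hmuniv hoti_mono hoti_zero.1 hoti_zero.2.1 _ hmE ha1
          (Set.mem_Iic.mp (hφ₃_maps hc))
      have h1 : qInt oti m (fun x => φ₁ (star (f₁ x) (g₁ x))) = oti a (φ₁ (star b c)) := by
        have heq : (fun x => φ₁ (star (f₁ x) (g₁ x)))
            = ({true} : Set Bool).indicator (fun _ => φ₁ (star b c)) := by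
          funext x
          by_cases hx : x ∈ ({true} : Set Bool) <;>
            simp [hf₁def, hg₁def, Set.indicator_of_mem, Set.indicator_of_notMem, -Set.indicator_singleton, hx,
              hstarb0, hφ₁_zero]
        rw [heq]
        exact qChar oti m hm0 hmuniv hoti_mono hoti_zero.1 hoti_zero.2.1 _ hmE ha1
          (Set.mem_Iic.mp (hφ₁_maps (Set.mem_Iic.mpr hbc1)))
      have := hii Bool m hcap f₁ g₁ (hmeas f₁) (hmeas g₁) (fun _ => hb1) hg₁1 hcomon
      rwa [h1, h2, h3] at this
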